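/- Let Φ = (φ_n)_n be a frame for H with upper frame (Bessel) bound M_Φ and let Φ^d = (φ^d_n)_n be a dual frame of Φ. Then for each bounded operator D on H with ‖S_Φ^{-1/2} − D‖ < 1/√M_Φ, the sequence Φ^{ad} = (D* S_Φ^{-1/2} φ_n − φ_n + S_Φ(φ^d_n))_n is an approximately dual frame of Φ, and T_Φ U_{Φ^{ad}} = S_Φ^{1/2} D. -/

import Mathlib

noncomputable section

open ContinuousLinearMap
open scoped ComplexInnerProductSpace ENNReal

variable {H : Type*} [NormedAddCommGroup H] [InnerProductSpace ℂ H] [CompleteSpace H]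

/-- The sequence space `ℓ²(ℕ)`. -/
abbrev Ltwo : Type := lp (fun _ : ℕ => ℂ) 2

/-- `φ` is a Bessel sequence with Bessel bound `M`:
`∑ₙ |⟨f, φₙ⟩|² ≤ M‖f‖²` for every `f`.  (Mathlib inner products are conjugate-linear in the
first slot, so `⟪φ n, f⟫` corresponds to the paper's `⟨f, φₙ⟩`.) -/
def IsBesselBound (φ : ℕ → H) (M : ℝ) : Prop :=
  ∀ f : H, Summable (fun n => ‖(⟪φ n, f⟫ : ℂ)‖ ^ 2) ∧
    ∑' n, ‖(⟪φ n, f⟫ : ℂ)‖ ^ 2 ≤ M * ‖f‖ ^ 2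

/-- `φ` is a frame with lower frame bound `m` and upper (Bessel) bound `M`. -/
def IsFrameWith (φ : ℕ → H) (m M : ℝ) : Prop :=
  0 < m ∧ IsBesselBound φ M ∧
    ∀ f : H, m * ‖f‖ ^ 2 ≤ ∑' n, ‖(⟪φ n, f⟫ : ℂ)‖ ^ 2

/-- `φ` is a frame for `H`. -/
def IsFrame (φ : ℕ → H) : Prop := ∃ m M, IsFrameWith φ m M

/-- `U` is the analysis operator of `φ` : `U f = (⟨f, φₙ⟩)ₙ`.
The synthesis operator is then `T_φ = adjoint U` and the frame operator is
`S_φ = adjoint U ∘L U`. -/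
def IsAnalysisOp (φ : ℕ → H) (U : H →L[ℂ] Ltwo) : Prop :=
  ∀ (f : H) (n : ℕ), U f n = (⟪φ n, f⟫ : ℂ)
set_option maxHeartbeats 1000000 in
/-- Let Φ be a frame with upper bound M_Φ and Φᵈ a dual frame of Φ (so that
`T_Φ U_{Φᵈ} = Id`).  Let `R` be the positive square root of the frame operator and
`Rinv = S_Φ^{-1/2}`.  Then for every bounded `D` with `‖S_Φ^{-1/2} - D‖ < 1/√M_Φ`, the
sequence `φᵃᵈₙ = D* S_Φ^{-1/2} φₙ - φₙ + S_Φ(φᵈₙ)` is an approximately dual frame of Φ with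
`T_Φ U_{Φᵃᵈ} = S_Φ^{1/2} D`. -/
theorem statement5 (φ φd : ℕ → H) (mφ Mφ : ℝ) (hφ : IsFrameWith φ mφ Mφ) (hφd : IsFrame φd)
    (Uφ Uφd : H →L[ℂ] Ltwo) (hUφ : IsAnalysisOp φ Uφ) (hUφd : IsAnalysisOp φd Uφd)
    (hdual : adjoint Uφ ∘L Uφd = 1)
    (R Rinv : H →L[ℂ] H) (hRpos : R.IsPositive) (hRsq : R ∘L R = adjoint Uφ ∘L Uφ)
    (hR1 : R ∘L Rinv = 1) (hR2 : Rinv ∘L R = 1)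
    (D : H →L[ℂ] H) (hD : ‖Rinv - D‖ < 1 / Real.sqrt Mφ)
    (φad : ℕ → H)
    (hφad : ∀ n : ℕ, φad n = adjoint D (Rinv (φ n)) - φ n + (adjoint Uφ ∘L Uφ) (φd n)) :
    ∃ (M : ℝ) (V : H →L[ℂ] Ltwo), IsBesselBound φad M ∧ IsAnalysisOp φad V ∧
      ‖(1 : H →L[ℂ] H) - adjoint Uφ ∘L V‖ < 1 ∧
      adjoint Uφ ∘L V = R ∘L D := by
  -- basic adjoint facts
  have hRsa : adjoint R = R := hRpos.isSelfAdjoint.adjoint_eq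
  have hRinvsa : adjoint Rinv = Rinv := by
    have h1 : adjoint Rinv ∘L R = 1 := by
      rw [← hRsa, ← adjoint_comp, hR1, one_def]
      exact adjoint_id
    calc adjoint Rinv = adjoint Rinv ∘L (R ∘L Rinv) := by rw [hR1, one_def, comp_id]
      _ = (adjoint Rinv ∘L R) ∘L Rinv := by rw [comp_assoc]
      _ = Rinv := by rw [h1, one_def, id_comp]
  -- the analysis operator of φad
  set S : H →L[ℂ] H := adjoint Uφ ∘L Uφ with hS
  have hSsa : adjoint S = S := by
    rw [hS, adjoint_comp, adjoint_adjoint]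
  set V : H →L[ℂ] Ltwo := (Uφ ∘L (Rinv ∘L D)) - Uφ + (Uφd ∘L S) with hV
  have hAn : IsAnalysisOp φad V := by
    intro f n
    have h1 : (⟪adjoint D (Rinv (φ n)), f⟫ : ℂ) = ⟪φ n, Rinv (D f)⟫ := by
      rw [adjoint_inner_left]
      rw [show (Rinv (φ n)) = adjoint Rinv (φ n) by rw [hRinvsa]]
      rw [adjoint_inner_left]
    have h2 : (⟪S (φd n), f⟫ : ℂ) = ⟪φd n, S f⟫ := by
      rw [show S (φd n) = adjoint S (φd n) by rw [hSsa], adjoint_inner_left]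
    have : V f = Uφ (Rinv (D f)) - Uφ f + Uφd (S f) := by
      simp [hV]
    rw [this, hφad n]
    have : (Uφ (Rinv (D f)) - Uφ f + Uφd (S f)) n
        = Uφ (Rinv (D f)) n - Uφ f n + Uφd (S f) n := rfl
    rw [this, hUφ, hUφ, hUφd, inner_add_left, inner_sub_left, h1, h2]
  -- the key identity  adjoint Uφ ∘L V = R ∘L D
  have hkey : adjoint Uφ ∘L V = R ∘L D := by
    ext f
    have hd : adjoint Uφ (Uφd (S f)) = S f := by
      have := congrFun (congrArg DFunLike.coe hdual) (S f)
      simpa using this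
    have hRR : ∀ g : H, R (R g) = S g := fun g => by
      have := congrFun (congrArg DFunLike.coe hRsq) g
      simpa using this
    have hRRinv : ∀ g : H, R (Rinv g) = g := fun g => by
      have := congrFun (congrArg DFunLike.coe hR1) g
      simpa using this
    show adjoint Uφ (V f) = R (D f)
    have : V f = Uφ (Rinv (D f)) - Uφ f + Uφd (S f) := by simp [hV]
    rw [this, map_add, map_sub, hd]
    have : adjoint Uφ (Uφ (Rinv (D f))) = S (Rinv (D f)) := rfl
    rw [this]
    have : adjoint Uφ (Uφ f) = S f := rfl
    rw [this]
    have : S (Rinv (D f)) = R (D f) := by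
      rw [← hRR, hRRinv]
    rw [this]
    abel
  -- norm estimates
  have hMpos : 0 < Real.sqrt Mφ := by
    by_contra h
    push_neg at h
    have h0 : Real.sqrt Mφ = 0 := le_antisymm h (Real.sqrt_nonneg _)
    rw [h0] at hD
    simp at hD
    exact absurd hD (not_lt.mpr (norm_nonneg _))
  have hUφle : ‖Uφ‖ ≤ Real.sqrt Mφ := by
    apply opNorm_le_bound _ (Real.sqrt_nonneg _)
    intro f
    have hnorm : ‖Uφ f‖ ^ 2 = ∑' n, ‖Uφ f n‖ ^ 2 := by
      have h := lp.norm_rpow_eq_tsum (p := 2) (f := Uφ f) (by norm_num)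
      have h2 : ((2 : ℝ≥0∞).toReal) = (2 : ℝ) := by norm_num
      rw [h2] at h
      calc ‖Uφ f‖ ^ 2 = ‖Uφ f‖ ^ (2:ℝ) := by
            rw [← Real.rpow_natCast ‖Uφ f‖ 2]; norm_num
        _ = ∑' n, ‖Uφ f n‖ ^ (2:ℝ) := h
        _ = ∑' n, ‖Uφ f n‖ ^ 2 := by
            congr 1; funext n
            rw [← Real.rpow_natCast ‖Uφ f n‖ 2]; norm_num
    have hb : ‖Uφ f‖ ^ 2 ≤ Mφ * ‖f‖ ^ 2 := by
      rw [hnorm]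
      have := (hφ.2.1 f).2
      calc ∑' n, ‖Uφ f n‖ ^ 2 = ∑' n, ‖(⟪φ n, f⟫ : ℂ)‖ ^ 2 := by
            congr 1; funext n; rw [hUφ f n]
        _ ≤ Mφ * ‖f‖ ^ 2 := this
    have : ‖Uφ f‖ ^ 2 ≤ (Real.sqrt Mφ * ‖f‖) ^ 2 := by
      calc ‖Uφ f‖ ^ 2 ≤ Mφ * ‖f‖ ^ 2 := hb
        _ = (Real.sqrt Mφ * ‖f‖) ^ 2 := by
            rw [mul_pow, Real.sq_sqrt (Real.sqrt_pos.mp hMpos).le]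
    calc ‖Uφ f‖ = Real.sqrt (‖Uφ f‖ ^ 2) := (Real.sqrt_sq (norm_nonneg _)).symm
      _ ≤ Real.sqrt ((Real.sqrt Mφ * ‖f‖) ^ 2) := Real.sqrt_le_sqrt this
      _ = Real.sqrt Mφ * ‖f‖ := Real.sqrt_sq (by positivity)
  have hRle : ‖R‖ ≤ Real.sqrt Mφ := by
    have h1 : ‖R‖ * ‖R‖ = ‖Uφ‖ * ‖Uφ‖ := by
      calc ‖R‖ * ‖R‖ = ‖adjoint R ∘L R‖ := (norm_adjoint_comp_self R).symm
        _ = ‖R ∘L R‖ := by rw [hRsa]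
        _ = ‖adjoint Uφ ∘L Uφ‖ := by rw [hRsq]
        _ = ‖Uφ‖ * ‖Uφ‖ := norm_adjoint_comp_self Uφ
    have h2 : ‖R‖ * ‖R‖ ≤ Real.sqrt Mφ * Real.sqrt Mφ := by
      rw [h1]
      exact mul_le_mul hUφle hUφle (norm_nonneg _) (Real.sqrt_nonneg _)
    calc ‖R‖ = Real.sqrt (‖R‖ * ‖R‖) := (Real.sqrt_mul_self (norm_nonneg R)).symm
      _ ≤ Real.sqrt (Real.sqrt Mφ * Real.sqrt Mφ) := Real.sqrt_le_sqrt h2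
      _ = Real.sqrt Mφ := Real.sqrt_mul_self (Real.sqrt_nonneg _)
  have hlt : ‖(1 : H →L[ℂ] H) - adjoint Uφ ∘L V‖ < 1 := by
    rw [hkey]
    have h1 : (1 : H →L[ℂ] H) - R ∘L D = R ∘L (Rinv - D) := by
      rw [comp_sub, hR1]
    rw [h1]
    calc ‖R ∘L (Rinv - D)‖ ≤ ‖R‖ * ‖Rinv - D‖ := opNorm_comp_le _ _
      _ ≤ Real.sqrt Mφ * ‖Rinv - D‖ := by
          apply mul_le_mul_of_nonneg_right hRle (norm_nonneg _)
      _ < Real.sqrt Mφ * (1 / Real.sqrt Mφ) := by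
          exact mul_lt_mul_of_pos_left hD hMpos
      _ = 1 := by field_simp
  -- the Bessel bound
  refine ⟨‖V‖ ^ 2, V, ?_, hAn, hlt, hkey⟩
  intro f
  have hVnorm : ∑' n, ‖V f n‖ ^ 2 = ‖V f‖ ^ 2 := by
    have h := lp.norm_rpow_eq_tsum (p := 2) (f := V f) (by norm_num)
    have h2 : ((2 : ℝ≥0∞).toReal) = (2 : ℝ) := by norm_num
    rw [h2] at h
    calc ∑' n, ‖V f n‖ ^ 2 = ∑' n, ‖V f n‖ ^ (2:ℝ) := by
          congr 1; funext n; rw [← Real.rpow_natCast ‖V f n‖ 2]; norm_num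
      _ = ‖V f‖ ^ (2:ℝ) := h.symm
      _ = ‖V f‖ ^ 2 := by rw [← Real.rpow_natCast ‖V f‖ 2]; norm_num
  have heq : (fun n => ‖(⟪φad n, f⟫ : ℂ)‖ ^ 2) = fun n => ‖V f n‖ ^ 2 := by
    funext n; rw [hAn f n]
  constructor
  · rw [heq]
    have := (lp.memℓp (V f)).summable (p := 2) (by norm_num)
    have h2 : ((2 : ℝ≥0∞).toReal) = (2 : ℝ) := by norm_num
    rw [h2] at this
    convert this using 1
    funext n; rw [← Real.rpow_natCast ‖V f n‖ 2]; norm_num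
  · rw [heq, hVnorm]
    calc ‖V f‖ ^ 2 ≤ (‖V‖ * ‖f‖) ^ 2 := by
          have := le_opNorm V f
          nlinarith [norm_nonneg (V f), norm_nonneg V, norm_nonneg f]
      _ = ‖V‖ ^ 2 * ‖f‖ ^ 2 := by ring
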